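/- Let $x_* \in \mathbb{R}^3$, let $\nu \in \mathbb{R}^3$ be a unit vector, and set $x_j := x_* + \frac{1}{j}\nu$ for $j \in \mathbb{N}_{\ge 1}$. Let $B$ be an open ball centered at $x_*$ of radius $r > 0$. Then $\| \Phi_3(\cdot, x_j) \|_{H^1(B \cap \{x : (x - x_*)\cdot \nu < 0\})} \to \infty$ as $j \to \infty$, where $\Phi_3(x, y) = \frac{1}{4\pi|x-y|}$. -/

import Mathlib

open MeasureTheory
open scoped RealInnerProductSpace ENNReal

variable {E : Type*} [NormedAddCommGroup E] [InnerProductSpace ℝ E] [CompleteSpace E]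

lemma hasGradientAt_Phi (y x : E) (h : x ≠ y) :
    HasGradientAt (fun z => 1 / (4 * Real.pi * ‖z - y‖))
      ((-(4 * Real.pi * ‖x - y‖ ^ 3)⁻¹) • (x - y)) x := by
  have hd0 : (0:ℝ) < ‖x - y‖ := by
    rw [norm_pos_iff]; exact sub_ne_zero.2 h
  have hd : ‖x - y‖ ≠ 0 := hd0.ne'
  have h1 : HasFDerivAt (fun z : E => ‖z - y‖ ^ 2) (2 • innerSL ℝ (x - y)) x := by
    simpa using ((hasFDerivAt_id x).sub_const y).norm_sq
  have h2 : HasFDerivAt (fun z : E => ‖z - y‖) (‖x - y‖⁻¹ • innerSL ℝ (x - y)) x := by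
    have hs : HasDerivAt Real.sqrt (1 / (2 * Real.sqrt (‖x - y‖ ^ 2))) (‖x - y‖ ^ 2) :=
      Real.hasDerivAt_sqrt (pow_ne_zero 2 hd)
    have h3 := hs.comp_hasFDerivAt x h1
    have heq : (Real.sqrt ∘ fun z : E => ‖z - y‖ ^ 2) = fun z : E => ‖z - y‖ :=
      funext fun z => Real.sqrt_sq (norm_nonneg _)
    rw [heq] at h3
    refine h3.congr_fderiv ?_
    ext w
    simp [Real.sqrt_sq (norm_nonneg (x - y))]
    ring
  have h3 : HasDerivAt (fun t : ℝ => 1 / (4 * Real.pi * t))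
      (-(4 * Real.pi) / (4 * Real.pi * ‖x - y‖) ^ 2) ‖x - y‖ := by
    have hl : HasDerivAt (fun t : ℝ => 4 * Real.pi * t) (4 * Real.pi) ‖x - y‖ := by
      simpa using (hasDerivAt_id ‖x - y‖).const_mul (4 * Real.pi)
    simpa [one_div, Pi.inv_def] using hl.inv (by positivity)
  have h4 := h3.comp_hasFDerivAt x h2
  have hfun : ((fun t : ℝ => 1 / (4 * Real.pi * t)) ∘ fun z : E => ‖z - y‖)
      = fun z : E => 1 / (4 * Real.pi * ‖z - y‖) := rfl
  rw [hfun] at h4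
  rw [hasGradientAt_iff_hasFDerivAt]
  refine h4.congr_fderiv ?_
  ext w
  simp only [InnerProductSpace.toDual_apply_apply, real_inner_smul_left,
    ContinuousLinearMap.coe_smul', Pi.smul_apply, innerSL_apply_apply, smul_eq_mul]
  have hπ : Real.pi ≠ 0 := Real.pi_ne_zero
  field_simp

lemma norm_gradient_Phi (y x : E) (h : x ≠ y) :
    ‖gradient (fun z => 1 / (4 * Real.pi * ‖z - y‖)) x‖
      = (4 * Real.pi * ‖x - y‖ ^ 2)⁻¹ := by
  have hd0 : (0:ℝ) < ‖x - y‖ := by rw [norm_pos_iff]; exact sub_ne_zero.2 h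
  rw [(hasGradientAt_Phi y x h).gradient, norm_smul]
  rw [Real.norm_eq_abs, abs_neg, abs_inv, abs_of_pos (by positivity)]
  field_simp


open Filter

/-- As the singularities `xⱼ = x* + ν/j` approach the boundary point `x*` from the
side `{(x - x*)·ν > 0}`, the `H¹`-norm of the fundamental solution
`Φ₃(·, xⱼ) = 1/(4π| · - xⱼ|)` on the half-ball
`B ∩ {x : (x - x*)·ν < 0}` blows up as `j → ∞`. -/
theorem fundamental_solution_H1_blowup
    (x_star ν : EuclideanSpace ℝ (Fin 3)) (hν : ‖ν‖ = 1) (r : ℝ) (hr : 0 < r) :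
    Filter.Tendsto
      (fun j : ℕ =>
        eLpNorm (fun x => 1 / (4 * Real.pi * ‖x - (x_star + (1 / (j : ℝ)) • ν)‖)) 2
          (volume.restrict
            (Metric.ball x_star r ∩ {x | ⟪x - x_star, ν⟫ < 0})) +
        eLpNorm
          (fun x => gradient
            (fun z => 1 / (4 * Real.pi * ‖z - (x_star + (1 / (j : ℝ)) • ν)‖)) x) 2
          (volume.restrict
            (Metric.ball x_star r ∩ {x | ⟪x - x_star, ν⟫ < 0})))
      Filter.atTop (nhds ⊤) := by
  classical
  set A : Set (EuclideanSpace ℝ (Fin 3)) :=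
    Metric.ball x_star r ∩ {x | ⟪x - x_star, ν⟫ < 0} with hA
  set V : ℝ≥0∞ := volume (Metric.ball (0 : EuclideanSpace ℝ (Fin 3)) 1) with hVdef
  have hV0 : V ≠ 0 := (Metric.measure_ball_pos volume _ one_pos).ne'
  have hVtop : V ≠ ⊤ := measure_ball_lt_top.ne
  -- the key lower bound for a fixed large j
  have key : ∀ j : ℕ, 1 ≤ (j : ℝ) → 1 / (j : ℝ) ≤ r →
      ENNReal.ofReal (Real.sqrt j / (128 * Real.pi)) * V ^ (1/2 : ℝ) ≤
        eLpNorm (fun x => gradient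
            (fun z => 1 / (4 * Real.pi * ‖z - (x_star + (1 / (j : ℝ)) • ν)‖)) x) 2
          (volume.restrict A) := by
    intro j hj1 hjr
    set J : ℝ := (j : ℝ) with hJdef
    have hJ0 : (0:ℝ) < J := lt_of_lt_of_le one_pos hj1
    have hJne : J ≠ 0 := hJ0.ne'
    have hJinv : (0:ℝ) < 1 / J := by positivity
    set y : EuclideanSpace ℝ (Fin 3) := x_star + (1 / J) • ν with hy
    set p : EuclideanSpace ℝ (Fin 3) := x_star - (1 / (2 * J)) • ν with hp
    set ρ : ℝ := 1 / (4 * J) with hρdef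
    have hρ : 0 < ρ := by positivity
    set S : Set (EuclideanSpace ℝ (Fin 3)) := Metric.ball p ρ with hS
    have e1 : ρ + 1 / (2 * J) = 3 / 4 * (1 / J) := by rw [hρdef]; field_simp; ring
    have e2 : ρ + 3 / (2 * J) = 7 / 4 * (1 / J) := by rw [hρdef]; field_simp; ring
    have e3 : ρ = 1 / 4 * (1 / J) := by rw [hρdef]; field_simp
    have e4 : 1 / (2 * J) = 1 / 2 * (1 / J) := by field_simp
    have e5 : 2 / J = 2 * (1 / J) := by ring
    have hpx : ‖p - x_star‖ = 1 / (2 * J) := by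
      have h : p - x_star = -((1 / (2 * J)) • ν) := by rw [hp]; abel
      rw [h, norm_neg, norm_smul, hν, Real.norm_eq_abs, abs_of_pos (by positivity), mul_one]
    have hsub : S ⊆ A := by
      intro x hx
      rw [hS, Metric.mem_ball, dist_eq_norm] at hx
      constructor
      · rw [Metric.mem_ball, dist_eq_norm]
        have h1 : ‖x - x_star‖ ≤ ‖x - p‖ + ‖p - x_star‖ := by
          simpa using norm_sub_le_norm_sub_add_norm_sub x p x_star
        rw [hpx] at h1
        linarith
      · show ⟪x - x_star, ν⟫ < 0
        have hd : x - x_star = (x - p) + (p - x_star) := by abel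
        rw [hd, inner_add_left]
        have h1 : ⟪x - p, ν⟫ ≤ ‖x - p‖ := by
          have h := real_inner_le_norm (x - p) ν
          rwa [hν, mul_one] at h
        have h2 : ⟪p - x_star, ν⟫ = -(1 / (2 * J)) := by
          have hps : p - x_star = -((1 / (2 * J)) • ν) := by rw [hp]; abel
          rw [hps, inner_neg_left, real_inner_smul_left, real_inner_self_eq_norm_sq, hν]
          ring
        rw [h2]
        linarith
    have hpy : ‖p - y‖ = 3 / (2 * J) := by
      have hco : (3 / (2 * J) : ℝ) = 1 / (2 * J) + 1 / J := by field_simp; ring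
      have h : p - y = -((3 / (2 * J)) • ν) := by
        rw [hp, hy, hco, add_smul]; abel
      rw [h, norm_neg, norm_smul, hν, Real.norm_eq_abs, abs_of_pos (by positivity), mul_one]
    have hdist : ∀ x ∈ S, x ≠ y ∧ ‖x - y‖ ≤ 2 / J := by
      intro x hx
      constructor
      · intro hxy
        have h1 : ⟪x - x_star, ν⟫ < 0 := (hsub hx).2
        have h2 : ⟪y - x_star, ν⟫ = 1 / J := by
          have h : y - x_star = (1 / J) • ν := by rw [hy]; abel
          rw [h, real_inner_smul_left, real_inner_self_eq_norm_sq, hν]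
          ring
        rw [hxy, h2] at h1
        linarith
      · have h1 : ‖x - y‖ ≤ ‖x - p‖ + ‖p - y‖ := by
          simpa using norm_sub_le_norm_sub_add_norm_sub x p y
        rw [hS, Metric.mem_ball, dist_eq_norm] at hx
        rw [hpy] at h1
        linarith
    set c : ℝ := J ^ 2 / (16 * Real.pi) with hc
    have hc0 : 0 < c := by have := Real.pi_pos; positivity
    have hglb : ∀ x ∈ S, c ≤
        ‖gradient (fun z => 1 / (4 * Real.pi * ‖z - y‖)) x‖ := by
      intro x hx
      obtain ⟨hne, hle⟩ := hdist x hx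
      rw [norm_gradient_Phi y x hne]
      have hd0 : (0:ℝ) < ‖x - y‖ := by rw [norm_pos_iff]; exact sub_ne_zero.2 hne
      have h0 : ‖x - y‖ ^ 2 ≤ (2 / J) ^ 2 := by nlinarith
      have h1 : 4 * Real.pi * ‖x - y‖ ^ 2 ≤ 4 * Real.pi * (2 / J) ^ 2 :=
        mul_le_mul_of_nonneg_left h0 (by positivity)
      have h2 : (4 * Real.pi * (2 / J) ^ 2)⁻¹ ≤ (4 * Real.pi * ‖x - y‖ ^ 2)⁻¹ :=
        inv_anti₀ (by positivity) h1
      have h3 : (4 * Real.pi * (2 / J) ^ 2)⁻¹ = c := by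
        have := Real.pi_ne_zero
        rw [hc]
        field_simp
        ring
      linarith
    -- measure computation
    have hSmeas : MeasurableSet S := measurableSet_ball
    have hvolS : volume S = ENNReal.ofReal (ρ ^ 3) * V := by
      rw [hS, Measure.addHaar_ball volume p hρ.le, finrank_euclideanSpace_fin]
    have hres0 : volume.restrict S ≠ 0 := by
      rw [Ne, Measure.restrict_eq_zero]
      exact (Metric.measure_ball_pos volume p hρ).ne'
    have hconst : eLpNorm (fun _ : EuclideanSpace ℝ (Fin 3) => c) 2 (volume.restrict S)
        = ENNReal.ofReal c * (volume S) ^ (1/2 : ℝ) := by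
      rw [eLpNorm_const c two_ne_zero hres0, Measure.restrict_apply_univ,
        Real.enorm_eq_ofReal hc0.le]
      norm_num
    have hmono : eLpNorm (fun _ : EuclideanSpace ℝ (Fin 3) => c) 2 (volume.restrict S) ≤
        eLpNorm (fun x => gradient (fun z => 1 / (4 * Real.pi * ‖z - y‖)) x) 2
          (volume.restrict S) := by
      apply eLpNorm_mono_ae
      refine ae_restrict_of_forall_mem hSmeas fun x hx => ?_
      rw [Real.norm_of_nonneg hc0.le]
      exact hglb x hx
    have hmeas : eLpNorm (fun x => gradient (fun z => 1 / (4 * Real.pi * ‖z - y‖)) x) 2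
          (volume.restrict S) ≤
        eLpNorm (fun x => gradient (fun z => 1 / (4 * Real.pi * ‖z - y‖)) x) 2
          (volume.restrict A) :=
      eLpNorm_mono_measure _ (Measure.restrict_mono hsub le_rfl)
    -- scalar identity
    have hscalar : c * Real.sqrt (ρ ^ 3) = Real.sqrt J / (128 * Real.pi) := by
      set s : ℝ := Real.sqrt J with hsdef
      have hs0 : 0 < s := Real.sqrt_pos.2 hJ0
      have hs2 : s ^ 2 = J := Real.sq_sqrt hJ0.le
      have hρs : ρ ^ 3 = (1 / (8 * s ^ 3)) ^ 2 := by
        rw [hρdef, ← hs2]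
        field_simp
        ring
      rw [hc, hρs, Real.sqrt_sq (by positivity), ← hs2]
      have := Real.pi_ne_zero
      field_simp
      ring
    have hstart : ENNReal.ofReal (Real.sqrt J / (128 * Real.pi)) * V ^ (1/2 : ℝ)
        = ENNReal.ofReal c * (volume S) ^ (1/2 : ℝ) := by
      rw [hvolS, ENNReal.mul_rpow_of_nonneg _ _ (by norm_num : (0:ℝ) ≤ 1/2),
        ENNReal.ofReal_rpow_of_pos (by positivity), ← mul_assoc,
        ← Real.sqrt_eq_rpow, ← ENNReal.ofReal_mul hc0.le, hscalar]
    calc ENNReal.ofReal (Real.sqrt J / (128 * Real.pi)) * V ^ (1/2 : ℝ)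
        = ENNReal.ofReal c * (volume S) ^ (1/2 : ℝ) := hstart
      _ = eLpNorm (fun _ : EuclideanSpace ℝ (Fin 3) => c) 2 (volume.restrict S) := hconst.symm
      _ ≤ _ := hmono.trans hmeas
  -- lower bound tends to ⊤
  have hsqrt : Tendsto Real.sqrt atTop atTop := by
    apply tendsto_atTop_atTop_of_monotone (fun a b h => Real.sqrt_le_sqrt h)
    intro b
    exact ⟨(max b 0) ^ 2, by rw [Real.sqrt_sq (le_max_right _ _)]; exact le_max_left _ _⟩
  have hlow : Tendsto (fun j : ℕ =>
      ENNReal.ofReal (Real.sqrt j / (128 * Real.pi)) * V ^ (1/2 : ℝ)) atTop (nhds ⊤) := by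
    have h1 : Tendsto (fun j : ℕ => Real.sqrt j / (128 * Real.pi)) atTop atTop :=
      (hsqrt.comp tendsto_natCast_atTop_atTop).atTop_div_const (by positivity)
    have h2 : Tendsto (fun j : ℕ =>
        ENNReal.ofReal (Real.sqrt j / (128 * Real.pi))) atTop (nhds ⊤) :=
      ENNReal.tendsto_ofReal_atTop.comp h1
    have h3 := ENNReal.Tendsto.mul_const (b := V ^ (1/2 : ℝ)) h2 (Or.inl ENNReal.top_ne_zero)
    rwa [ENNReal.top_mul (ENNReal.rpow_pos (pos_iff_ne_zero.2 hV0) hVtop).ne'] at h3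
  apply tendsto_nhds_top_mono hlow
  have hN : ∀ᶠ j : ℕ in atTop, 1 ≤ (j : ℝ) ∧ 1 / (j : ℝ) ≤ r := by
    filter_upwards [eventually_ge_atTop (⌈1/r⌉₊ + 1)] with j hj
    have h1 : (1:ℝ) ≤ (j:ℝ) := by
      have h : 1 ≤ j := le_trans (Nat.le_add_left 1 _) hj
      exact_mod_cast h
    refine ⟨h1, ?_⟩
    have h2 : (1:ℝ)/r ≤ (j:ℝ) := by
      calc (1:ℝ)/r ≤ (⌈1/r⌉₊ : ℝ) := Nat.le_ceil _
        _ ≤ (j:ℝ) := by exact_mod_cast le_trans (Nat.le_add_right _ 1) hj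
    have h3 : (0:ℝ) < (j:ℝ) := lt_of_lt_of_le one_pos h1
    have h4 : 1 ≤ (j:ℝ) * r := by
      have := (div_le_iff₀ hr).1 h2
      linarith
    rw [div_le_iff₀ h3]
    linarith
  filter_upwards [hN] with j hj
  calc ENNReal.ofReal (Real.sqrt j / (128 * Real.pi)) * V ^ (1/2 : ℝ)
      ≤ eLpNorm (fun x => gradient
          (fun z => 1 / (4 * Real.pi * ‖z - (x_star + (1 / (j : ℝ)) • ν)‖)) x) 2
        (volume.restrict A) := key j hj.1 hj.2
    _ ≤ _ := le_add_self
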